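/- For a wing-like rotationally symmetric translating soliton with c > 0, neck radius ε > 0 attained at r(0) = ε with φ(0) = -π/2, and minimum height at radius r₀ where φ(r₀) = 0: if r ↦ ξ(r)/ξ'(r) is non-decreasing, then (1/(n-1)) (ξ(ε)/ξ'(ε)) (π/2 - c(r₀-ε)) ≤ t(ε) - t(r₀) ≤ (1/(n-1)) (ξ(r₀)/ξ'(r₀)) (π/2 - c(r₀-ε)). In particular, since t(ε) ≥ t(r₀), the neck satisfies r₀ - ε ≤ π/(2c). -/
import Mathlib


lemma mono_aux {F F' : ℝ → ℝ} {a b : ℝ} (hab : a ≤ b)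
    (hF : ∀ r ∈ Set.Icc a b, HasDerivAt F (F' r) r)
    (h0 : ∀ r ∈ Set.Icc a b, 0 ≤ F' r) : F a ≤ F b := by
  have hm : MonotoneOn F (Set.Icc a b) := by
    apply monotoneOn_of_deriv_nonneg (convex_Icc a b)
    · exact fun r hr => (hF r hr).continuousAt.continuousWithinAt
    · intro r hr
      rw [interior_Icc] at hr
      exact (hF r (Set.Ioo_subset_Icc_self hr)).differentiableAt.differentiableWithinAt
    · intro r hr
      rw [interior_Icc] at hr
      rw [(hF r (Set.Ioo_subset_Icc_self hr)).deriv]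
      exact h0 r (Set.Ioo_subset_Icc_self hr)
  exact hm (Set.left_mem_Icc.mpr hab) (Set.right_mem_Icc.mpr hab) hab



/-- For a wing-like rotationally symmetric translating soliton with
c > 0, neck radius ε (where φ(ε) = -π/2) and minimum height at r₀ (where φ(r₀) = 0),
with t'(r) = (1/(n-1))(ξ/ξ')(c - φ'(r)) and ξ/ξ' non-decreasing, one has
(1/(n-1))(ξ(ε)/ξ'(ε))(π/2 - c(r₀-ε)) ≤ t(ε) - t(r₀)
  ≤ (1/(n-1))(ξ(r₀)/ξ'(r₀))(π/2 - c(r₀-ε)),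
and since t(ε) ≥ t(r₀), the neck satisfies r₀ - ε ≤ π/(2c). -/
theorem stmt_12 (n : ℕ) (hn : 2 ≤ n) (c ε r₀ : ℝ) (hc : 0 < c)
    (hε : 0 < ε) (hεr : ε < r₀)
    (ξ t φ : ℝ → ℝ)
    (hgmono : MonotoneOn (fun r => ξ r / deriv ξ r) (Set.Icc ε r₀))
    (hgpos : ∀ r ∈ Set.Icc ε r₀, 0 < ξ r / deriv ξ r)
    (hφε : φ ε = -(Real.pi / 2)) (hφr₀ : φ r₀ = 0)
    (hφdiff : ∀ r ∈ Set.Icc ε r₀, DifferentiableAt ℝ φ r)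
    -- t'(r) = (1/(n-1))(ξ/ξ')(c - φ'(r)) on the arc from the neck to the lowest point
    (ht : ∀ r ∈ Set.Icc ε r₀,
      HasDerivAt t ((1 / (n - 1 : ℝ)) * (ξ r / deriv ξ r) * (c - deriv φ r)) r)
    -- ṫ = sin φ ≤ 0 on this arc
    (hmono : ∀ r ∈ Set.Icc ε r₀, deriv t r ≤ 0) :
    (1 / (n - 1 : ℝ)) * (ξ ε / deriv ξ ε) * (Real.pi / 2 - c * (r₀ - ε)) ≤ t ε - t r₀ ∧
    t ε - t r₀ ≤ (1 / (n - 1 : ℝ)) * (ξ r₀ / deriv ξ r₀) * (Real.pi / 2 - c * (r₀ - ε)) ∧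
    r₀ - ε ≤ Real.pi / (2 * c) := by
  set K : ℝ := 1 / (n - 1 : ℝ) with hKdef
  have hn' : (2:ℝ) ≤ (n:ℝ) := by exact_mod_cast hn
  have hK : 0 < K := by
    rw [hKdef]
    apply one_div_pos.mpr
    linarith
  set g : ℝ → ℝ := fun r => ξ r / deriv ξ r with hgdef
  have hεmem : ε ∈ Set.Icc ε r₀ := Set.left_mem_Icc.mpr hεr.le
  have hrmem : r₀ ∈ Set.Icc ε r₀ := Set.right_mem_Icc.mpr hεr.le
  have hφ' : ∀ r ∈ Set.Icc ε r₀, c ≤ deriv φ r := by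
    intro r hr
    have h1 := hmono r hr
    rw [(ht r hr).deriv] at h1
    nlinarith [mul_pos hK (hgpos r hr)]
  have hga : ∀ r ∈ Set.Icc ε r₀, g ε ≤ g r := fun r hr => hgmono hεmem hr hr.1
  have hgb : ∀ r ∈ Set.Icc ε r₀, g r ≤ g r₀ := fun r hr => hgmono hr hrmem hr.2
  have hlow : K * g ε * (φ r₀ - φ ε - c * (r₀ - ε)) ≤ t ε - t r₀ := by
    have hF := mono_aux (F := fun r => t ε - t r - K * g ε * (φ r - φ ε - c * (r - ε)))
      (F' := fun r => -(K * g r * (c - deriv φ r)) - K * g ε * (deriv φ r - c * 1))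
      hεr.le
      (fun r hr => by
        have h1 : HasDerivAt (fun r => t ε - t r) (-(K * g r * (c - deriv φ r))) r :=
          (ht r hr).const_sub (t ε)
        have h2 : HasDerivAt (fun r => φ r - φ ε - c * (r - ε))
            (deriv φ r - c * 1) r :=
          (((hφdiff r hr).hasDerivAt.sub_const (φ ε)).sub
            (((hasDerivAt_id r).sub_const ε).const_mul c))
        exact h1.sub (h2.const_mul (K * g ε)))
      (fun r hr => by
        show 0 ≤ -(K * g r * (c - deriv φ r)) - K * g ε * (deriv φ r - c * 1)
        have h1 := hφ' r hr
        have h2 := hga r hr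
        nlinarith [mul_nonneg (mul_nonneg hK.le (sub_nonneg.mpr h2)) (sub_nonneg.mpr h1)])
    beta_reduce at hF
    nlinarith [hF]
  have hhigh : t ε - t r₀ ≤ K * g r₀ * (φ r₀ - φ ε - c * (r₀ - ε)) := by
    have hF := mono_aux (F := fun r => K * g r₀ * (φ r - φ ε - c * (r - ε)) - (t ε - t r))
      (F' := fun r => K * g r₀ * (deriv φ r - c * 1) - -(K * g r * (c - deriv φ r)))
      hεr.le
      (fun r hr => by
        have h1 : HasDerivAt (fun r => t ε - t r) (-(K * g r * (c - deriv φ r))) r :=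
          (ht r hr).const_sub (t ε)
        have h2 : HasDerivAt (fun r => φ r - φ ε - c * (r - ε))
            (deriv φ r - c * 1) r :=
          (((hφdiff r hr).hasDerivAt.sub_const (φ ε)).sub
            (((hasDerivAt_id r).sub_const ε).const_mul c))
        exact (h2.const_mul (K * g r₀)).sub h1)
      (fun r hr => by
        show 0 ≤ K * g r₀ * (deriv φ r - c * 1) - -(K * g r * (c - deriv φ r))
        have h1 := hφ' r hr
        have h2 := hgb r hr
        nlinarith [mul_nonneg (mul_nonneg hK.le (sub_nonneg.mpr h2)) (sub_nonneg.mpr h1)])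
    beta_reduce at hF
    nlinarith [hF]
  have hΔ : φ r₀ - φ ε = Real.pi / 2 := by rw [hφε, hφr₀]; ring
  rw [hΔ] at hlow hhigh
  have htmono : t r₀ ≤ t ε := by
    have hF := mono_aux (F := fun r => -t r)
      (F' := fun r => -(K * (ξ r / deriv ξ r) * (c - deriv φ r)))
      hεr.le
      (fun r hr => (ht r hr).neg)
      (fun r hr => by
        show 0 ≤ -(K * (ξ r / deriv ξ r) * (c - deriv φ r))
        have h1 := hmono r hr
        rw [(ht r hr).deriv] at h1
        linarith)
    beta_reduce at hF
    linarith
  have hgr₀ := hgpos r₀ hrmem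
  have hX : 0 ≤ Real.pi / 2 - c * (r₀ - ε) := by nlinarith [mul_pos hK hgr₀]
  refine ⟨hlow, hhigh, ?_⟩
  rw [le_div_iff₀ (by positivity : (0:ℝ) < 2 * c)]
  nlinarith
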